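/- Let η > 0 and let M, L ∈ ℝ^N. Given a distribution Q' on [N], define Q(π) ∝ Q'(π)exp(−ηM(π)) and Q''(π) ∝ Q'(π)exp(−ηL(π)). Then there exists a distribution ξ on [N] (a convex combination of Q and Q'') such that for any distribution Q* on [N]: Σ_π (Q(π) − Q*(π))L(π) ≤ (D(Q*, Q') − D(Q*, Q''))/η + 2η·Σ_π ξ(π)(L(π) − M(π))². -/

import Mathlib

lemma kl_ge (p q : ℝ) (hp : 0 < p) (hq : 0 < q) :
    (Real.sqrt q - Real.sqrt p)^2 ≤ p * (Real.log p - Real.log q) - p + q := by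
  set a := Real.sqrt p with ha
  set b := Real.sqrt q with hb
  have hap : 0 < a := Real.sqrt_pos.mpr hp
  have hbp : 0 < b := Real.sqrt_pos.mpr hq
  have ha2 : a^2 = p := Real.sq_sqrt hp.le
  have hb2 : b^2 = q := Real.sq_sqrt hq.le
  have hlogp : Real.log p = 2 * Real.log a := by
    rw [← ha2, Real.log_pow]; push_cast; ring
  have hlogq : Real.log q = 2 * Real.log b := by
    rw [← hb2, Real.log_pow]; push_cast; ring
  have h1 : Real.log (b / a) ≤ b / a - 1 := Real.log_le_sub_one_of_pos (by positivity)
  rw [Real.log_div hbp.ne' hap.ne'] at h1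
  have h2 : a * (Real.log b - Real.log a) ≤ b - a := by
    have h3 := mul_le_mul_of_nonneg_left h1 hap.le
    have e : a * (b / a - 1) = b - a := by field_simp
    rw [e] at h3
    nlinarith [h3]
  rw [hlogp, hlogq, ← ha2, ← hb2]
  nlinarith [mul_le_mul_of_nonneg_left h2 (by positivity : (0:ℝ) ≤ 2*a)]

lemma ptwise (η p q x : ℝ) (hη : 0 < η) (hp : 0 < p) (hq : 0 < q) :
    η * (q - p) * x - (p * (Real.log p - Real.log q) - p + q)
      ≤ 2 * η^2 * (1/2 * q + (1 - 1/2) * p) * x^2 := by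
  have hkl := kl_ge p q hp hq
  have hpq : 0 < p + q := by linarith
  have h3 : (q - p)^2 ≤ 2*(p+q)*(Real.sqrt q - Real.sqrt p)^2 := by
    have e1 : Real.sqrt q ^ 2 = q := Real.sq_sqrt hq.le
    have e2 : Real.sqrt p ^ 2 = p := Real.sq_sqrt hp.le
    nlinarith [sq_nonneg (Real.sqrt q - Real.sqrt p), sq_nonneg (Real.sqrt q + Real.sqrt p),
      sq_nonneg ((Real.sqrt q - Real.sqrt p) * (Real.sqrt q + Real.sqrt p))]
  have h4 : 4*(p+q)*(η*(q-p)*x) ≤ 4*(p+q)*(η^2*(p+q)*x^2) + (q-p)^2 := by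
    nlinarith [sq_nonneg (2*η*(p+q)*x - (q-p))]
  have h5 : 4*(p+q)*(η*(q-p)*x) ≤ 4*(p+q)*(η^2*(p+q)*x^2 + (p * (Real.log p - Real.log q) - p + q)) := by
    nlinarith
  have h6 : η*(q-p)*x ≤ η^2*(p+q)*x^2 + (p * (Real.log p - Real.log q) - p + q) := by
    have := (mul_le_mul_iff_right₀ (by positivity : (0:ℝ) < 4*(p+q))).mp h5
    linarith
  nlinarith [h6]

/-- Key unconditional optimistic Exp4 inequality: there is a distribution `ξ`,
a convex combination of `Q` and `Q''`, such that the regret inequality holds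
for every comparator distribution `Qstar`. -/
theorem optimistic_exp4_unconditional (N : ℕ) (hN : 0 < N) (η : ℝ) (hη : 0 < η)
    (M L : Fin N → ℝ) (Q' : Fin N → ℝ)
    (hQ'pos : ∀ π, 0 < Q' π) (hQ'sum : ∑ π, Q' π = 1)
    (Q Q'' : Fin N → ℝ)
    (hQ : ∀ π, Q π = Q' π * Real.exp (-η * M π) /
      ∑ π', Q' π' * Real.exp (-η * M π'))
    (hQ'' : ∀ π, Q'' π = Q' π * Real.exp (-η * L π) /
      ∑ π', Q' π' * Real.exp (-η * L π')) :
    ∃ c : ℝ, 0 ≤ c ∧ c ≤ 1 ∧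
      ∀ Qstar : Fin N → ℝ, (∀ π, 0 ≤ Qstar π) → (∑ π, Qstar π = 1) →
        ∑ π, (Q π - Qstar π) * L π ≤
          ((∑ π, Qstar π * Real.log (Qstar π / Q' π)) -
            ∑ π, Qstar π * Real.log (Qstar π / Q'' π)) / η
          + 2 * η * ∑ π, (c * Q π + (1 - c) * Q'' π) * (L π - M π)^2 := by
  haveI : Nonempty (Fin N) := Fin.pos_iff_nonempty.mp hN
  set ZM := ∑ π', Q' π' * Real.exp (-η * M π') with hZM
  set ZL := ∑ π', Q' π' * Real.exp (-η * L π') with hZL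
  have hZMpos : 0 < ZM :=
    Finset.sum_pos (fun π _ => mul_pos (hQ'pos π) (Real.exp_pos _)) Finset.univ_nonempty
  have hZLpos : 0 < ZL :=
    Finset.sum_pos (fun π _ => mul_pos (hQ'pos π) (Real.exp_pos _)) Finset.univ_nonempty
  have hQpos : ∀ π, 0 < Q π := fun π => by
    rw [hQ π]; exact div_pos (mul_pos (hQ'pos π) (Real.exp_pos _)) hZMpos
  have hQ''pos : ∀ π, 0 < Q'' π := fun π => by
    rw [hQ'' π]; exact div_pos (mul_pos (hQ'pos π) (Real.exp_pos _)) hZLpos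
  have hQsum : ∑ π, Q π = 1 := by
    rw [Finset.sum_congr rfl fun π _ => hQ π, ← Finset.sum_div, ← hZM, div_self hZMpos.ne']
  have hQ''sum : ∑ π, Q'' π = 1 := by
    rw [Finset.sum_congr rfl fun π _ => hQ'' π, ← Finset.sum_div, ← hZL, div_self hZLpos.ne']
  have hlogQ : ∀ π, Real.log (Q π) = Real.log (Q' π) + (-η * M π) - Real.log ZM := fun π => by
    rw [hQ π, Real.log_div (mul_pos (hQ'pos π) (Real.exp_pos _)).ne' hZMpos.ne',
      Real.log_mul (hQ'pos π).ne' (Real.exp_pos _).ne', Real.log_exp]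
  have hlogQ'' : ∀ π, Real.log (Q'' π) = Real.log (Q' π) + (-η * L π) - Real.log ZL := fun π => by
    rw [hQ'' π, Real.log_div (mul_pos (hQ'pos π) (Real.exp_pos _)).ne' hZLpos.ne',
      Real.log_mul (hQ'pos π).ne' (Real.exp_pos _).ne', Real.log_exp]
  refine ⟨1/2, by norm_num, by norm_num, ?_⟩
  intro Qstar hQs hQssum
  set S := ∑ π, ((1:ℝ)/2 * Q π + (1 - 1/2) * Q'' π) * (L π - M π)^2 with hS
  -- key inequality
  have hd' : ∀ π, Real.log (Q' π) - Real.log (Q'' π) = η * L π + Real.log ZL := fun π => by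
    rw [hlogQ'' π]; ring
  have hd : ∀ π, Real.log (Q π) - Real.log (Q'' π)
      = η * (L π - M π) + (Real.log ZL - Real.log ZM) := fun π => by
    rw [hlogQ π, hlogQ'' π]; ring
  have key_eq : η * (∑ π, Q π * L π) + Real.log ZL
      = ∑ π, Q π * (Real.log (Q' π) - Real.log (Q'' π)) := by
    have e : ∀ π ∈ Finset.univ, Q π * (Real.log (Q' π) - Real.log (Q'' π))
        = η * (Q π * L π) + Real.log ZL * Q π := fun π _ => by rw [hd' π]; ring
    rw [Finset.sum_congr rfl e, Finset.sum_add_distrib, ← Finset.mul_sum, ← Finset.mul_sum,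
      hQsum, mul_one]
  have split_eq : ∑ π, Q π * (Real.log (Q' π) - Real.log (Q'' π))
      = (∑ π, Q π * (Real.log (Q' π) - Real.log (Q π)))
        + ∑ π, Q π * (Real.log (Q π) - Real.log (Q'' π)) := by
    rw [← Finset.sum_add_distrib]
    exact Finset.sum_congr rfl fun π _ => by ring
  have h1 : (∑ π, Q π * (Real.log (Q' π) - Real.log (Q π))) ≤ 0 := by
    have hterm : ∀ π ∈ Finset.univ, Q π * (Real.log (Q' π) - Real.log (Q π)) ≤ Q' π - Q π := by
      intro π _
      have hlog := Real.log_le_sub_one_of_pos (div_pos (hQ'pos π) (hQpos π))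
      rw [Real.log_div (hQ'pos π).ne' (hQpos π).ne'] at hlog
      have h2 := mul_le_mul_of_nonneg_left hlog (hQpos π).le
      have hQne := (hQpos π).ne'
      have e : Q π * (Q' π / Q π - 1) = Q' π - Q π := by field_simp
      rw [e] at h2
      nlinarith [h2]
    calc (∑ π, Q π * (Real.log (Q' π) - Real.log (Q π))) ≤ ∑ π, (Q' π - Q π) :=
          Finset.sum_le_sum hterm
      _ = 0 := by rw [Finset.sum_sub_distrib, hQ'sum, hQsum, sub_self]
  have h2 : ∑ π, Q π * (Real.log (Q π) - Real.log (Q'' π)) ≤ 2 * η^2 * S := by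
    have eA : ∑ π, Q π * (Real.log (Q π) - Real.log (Q'' π))
        = η * (∑ π, Q π * (L π - M π)) + (Real.log ZL - Real.log ZM) := by
      have e : ∀ π ∈ Finset.univ, Q π * (Real.log (Q π) - Real.log (Q'' π))
          = η * (Q π * (L π - M π)) + (Real.log ZL - Real.log ZM) * Q π := fun π _ => by
        rw [hd π]; ring
      rw [Finset.sum_congr rfl e, Finset.sum_add_distrib, ← Finset.mul_sum, ← Finset.mul_sum,
        hQsum, mul_one]
    have eB : ∑ π, Q'' π * (Real.log (Q'' π) - Real.log (Q π))
        = -(η * (∑ π, Q'' π * (L π - M π)) + (Real.log ZL - Real.log ZM)) := by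
      have e : ∀ π ∈ Finset.univ, Q'' π * (Real.log (Q'' π) - Real.log (Q π))
          = -(η * (Q'' π * (L π - M π)) + (Real.log ZL - Real.log ZM) * Q'' π) := fun π _ => by
        have : Real.log (Q'' π) - Real.log (Q π)
            = -(η * (L π - M π) + (Real.log ZL - Real.log ZM)) := by
          rw [← hd π]; ring
        rw [this]; ring
      rw [Finset.sum_congr rfl e, Finset.sum_neg_distrib, Finset.sum_add_distrib,
        ← Finset.mul_sum, ← Finset.mul_sum, hQ''sum, mul_one]
    have hsum_ptw : ∑ π, (η * (Q π - Q'' π) * (L π - M π)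
          - (Q'' π * (Real.log (Q'' π) - Real.log (Q π)) - Q'' π + Q π))
        ≤ ∑ π, 2 * η^2 * ((1:ℝ)/2 * Q π + (1 - 1/2) * Q'' π) * (L π - M π)^2 :=
      Finset.sum_le_sum fun π _ => ptwise η (Q'' π) (Q π) (L π - M π) hη (hQ''pos π) (hQpos π)
    have lhs_eq : ∑ π, (η * (Q π - Q'' π) * (L π - M π)
          - (Q'' π * (Real.log (Q'' π) - Real.log (Q π)) - Q'' π + Q π))
        = η * (∑ π, Q π * (L π - M π)) - η * (∑ π, Q'' π * (L π - M π))
          - (∑ π, Q'' π * (Real.log (Q'' π) - Real.log (Q π)))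
          + (∑ π, Q'' π) - (∑ π, Q π) := by
      rw [Finset.mul_sum, Finset.mul_sum, ← Finset.sum_sub_distrib, ← Finset.sum_sub_distrib,
        ← Finset.sum_add_distrib, ← Finset.sum_sub_distrib]
      exact Finset.sum_congr rfl fun π _ => by ring
    have rhs_eq : ∑ π, 2 * η^2 * ((1:ℝ)/2 * Q π + (1 - 1/2) * Q'' π) * (L π - M π)^2
        = 2 * η^2 * S := by
      rw [hS, Finset.mul_sum]
      exact Finset.sum_congr rfl fun π _ => by ring
    rw [eA]
    rw [lhs_eq, eB, hQsum, hQ''sum, rhs_eq] at hsum_ptw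
    linarith [hsum_ptw]
  have key : η * (∑ π, Q π * L π) + Real.log ZL ≤ 2 * η^2 * S := by
    rw [key_eq, split_eq]; linarith [h1, h2]
  -- rewrite the KL difference
  have hKL : (∑ π, Qstar π * Real.log (Qstar π / Q' π))
      - ∑ π, Qstar π * Real.log (Qstar π / Q'' π)
      = -(η * ∑ π, Qstar π * L π) - Real.log ZL := by
    rw [← Finset.sum_sub_distrib]
    have e : ∀ π ∈ Finset.univ, Qstar π * Real.log (Qstar π / Q' π)
        - Qstar π * Real.log (Qstar π / Q'' π)
        = -(η * (Qstar π * L π)) + (-Real.log ZL) * Qstar π := by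
      intro π _
      rcases eq_or_lt_of_le (hQs π) with h0 | hpos
      · rw [← h0]; ring
      · rw [Real.log_div hpos.ne' (hQ'pos π).ne', Real.log_div hpos.ne' (hQ''pos π).ne',
          hlogQ'' π]
        ring
    rw [Finset.sum_congr rfl e, Finset.sum_add_distrib, Finset.sum_neg_distrib,
      ← Finset.mul_sum, ← Finset.mul_sum, hQssum, mul_one]
    ring
  rw [hKL]
  have hsplit : ∑ π, (Q π - Qstar π) * L π = (∑ π, Q π * L π) - ∑ π, Qstar π * L π := by
    rw [← Finset.sum_sub_distrib]
    exact Finset.sum_congr rfl fun π _ => by ring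
  rw [hsplit]
  have hgoal2 : (-(η * ∑ π, Qstar π * L π) - Real.log ZL) / η
      = -(∑ π, Qstar π * L π) - Real.log ZL / η := by
    field_simp
  rw [hgoal2]
  have hdivkey : (∑ π, Q π * L π) + Real.log ZL / η ≤ 2 * η * S := by
    rw [← mul_le_mul_iff_right₀ hη]
    calc η * ((∑ π, Q π * L π) + Real.log ZL / η)
        = η * (∑ π, Q π * L π) + Real.log ZL := by field_simp
      _ ≤ 2 * η^2 * S := key
      _ = η * (2 * η * S) := by ring
  linarith [hdivkey]
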